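/- Let A be a nonnegative selfadjoint operator on a complex Hilbert space X with trivial kernel, α > 0, and x ∈ X with ∫₀^∞ t^{2α-1}‖e^{-tA}x‖²_X dt < ∞. Then the vectors y_n = Γ(α)^{-1} ∫₀^n t^{α-1} e^{-tA} x dt form a Cauchy sequence in X, their limit y_∞ belongs to D(A^α), and A^α y_∞ = x. -/

import Mathlib

/-!
By the spectral theorem, every nonnegative selfadjoint operator `A` on a complex
Hilbert space `X` (with trivial kernel) is unitarily equivalent to multiplication by a
measurable function `a ≥ 0` (with `a > 0` a.e.) on some `L²(μ)`.  We formalize the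
statement in this spectral model: `X = L²(μ)`, `(e^{-tA}x)(i) = exp(-t·a i)·x i`,
`(A^α y)(i) = (a i)^α·y i`, and `x ∈ R(A^α)` iff `x = A^α y` for some `y ∈ L²(μ)`.
-/

open MeasureTheory Filter
open scoped ENNReal NNReal Topology

/-- `‖e^{-tA} x‖²` in the spectral model. -/
noncomputable def heatNormSq {ι : Type*} [MeasurableSpace ι] (μ : Measure ι)
    (a : ι → ℝ) (x : ι → ℂ) (t : ℝ) : ℝ≥0∞ :=
  ∫⁻ i, (‖x i‖₊ : ℝ≥0∞) ^ 2 * ENNReal.ofReal (Real.exp (-(2 * t * a i))) ∂μ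

/-- `∫₀^∞ t^{2α-1} ‖e^{-tA} x‖² dt` in the spectral model; this is the square of the
norm `|||x|||_{R(A^α)}`. -/
noncomputable def rangeIntegral {ι : Type*} [MeasurableSpace ι] (μ : Measure ι)
    (a : ι → ℝ) (α : ℝ) (x : ι → ℂ) : ℝ≥0∞ :=
  ∫⁻ t in Set.Ioi (0 : ℝ), ENNReal.ofReal (t ^ (2 * α - 1)) * heatNormSq μ a x t

/-- The partial Balakrishnan approximation `y_n = Γ(α)⁻¹ ∫₀^n t^{α-1} e^{-tA} x dt`
in the spectral model. -/
noncomputable def balakrishnan {ι : Type*} (a : ι → ℝ) (α : ℝ) (x : ι → ℂ)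
    (n : ℕ) : ι → ℂ := fun i =>
  (((Real.Gamma α)⁻¹ * ∫ t in Set.Ioc (0 : ℝ) (n : ℝ),
      t ^ (α - 1) * Real.exp (-(t * a i)) : ℝ) : ℂ) * x i

lemma aux_integrable {β r : ℝ} (hβ : 0 < β) (hr : 0 < r) :
    MeasureTheory.IntegrableOn (fun t : ℝ => t ^ (β - 1) * Real.exp (-(r * t))) (Set.Ioi 0) := by
  have h := integrableOn_rpow_mul_exp_neg_mul_rpow (p := 1) (s := β - 1) (b := r)
    (by linarith) one_pos hr
  refine h.congr_fun (fun t ht => ?_) measurableSet_Ioi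
  beta_reduce
  rw [Real.rpow_one, neg_mul]

lemma iUnion_Ioc_nat : ⋃ n : ℕ, Set.Ioc (0:ℝ) (n:ℝ) = Set.Ioi 0 := by
  ext t
  simp only [Set.mem_iUnion, Set.mem_Ioc, Set.mem_Ioi]
  constructor
  · rintro ⟨n, h1, _⟩; exact h1
  · intro ht; obtain ⟨n, hn⟩ := exists_nat_ge t; exact ⟨n, ht, hn⟩

lemma eLpNorm_two_eq {ι : Type*} [MeasurableSpace ι] (μ : Measure ι) (f : ι → ℂ) :
    eLpNorm f 2 μ = (∫⁻ i, (‖f i‖₊ : ℝ≥0∞) ^ 2 ∂μ) ^ (1/(2:ℝ)) := by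
  rw [eLpNorm_eq_lintegral_rpow_enorm_toReal (by norm_num) (by norm_num)]
  have h2 : ((2:ℝ≥0∞)).toReal = 2 := by norm_num
  rw [h2]
  congr 1
  refine lintegral_congr fun i => ?_
  rw [enorm_eq_nnnorm, ← ENNReal.rpow_natCast]
  norm_num

lemma ofReal_norm_eq_coe_nnnorm {E : Type*} [SeminormedAddGroup E] (z : E) :
    ENNReal.ofReal ‖z‖ = (‖z‖₊ : ℝ≥0∞) := ofReal_norm z

/-- The coefficient in the Balakrishnan approximation. -/
noncomputable def balCoef {ι : Type*} (a : ι → ℝ) (α : ℝ) (n : ℕ) (i : ι) : ℝ :=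
  ∫ t in Set.Ioc (0:ℝ) (n:ℝ), t ^ (α - 1) * Real.exp (-(t * a i))

lemma balakrishnan_eq {ι : Type*} (a : ι → ℝ) (α : ℝ) (x : ι → ℂ) (n : ℕ) (i : ι) :
    balakrishnan a α x n i = (((Real.Gamma α)⁻¹ * balCoef a α n i : ℝ) : ℂ) * x i := rfl


/-- If `∫₀^∞ t^{2α-1}‖e^{-tA}x‖² dt < ∞`, then the vectors
`y_n = Γ(α)⁻¹ ∫₀^n t^{α-1} e^{-tA} x dt` form a Cauchy sequence in `X`, their limit
`y_∞` belongs to `D(A^α)`, and `A^α y_∞ = x`. -/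
theorem stmt12 {ι : Type*} [MeasurableSpace ι] (μ : Measure ι)
    (a : ι → ℝ) (hameas : Measurable a) (ha0 : ∀ i, 0 ≤ a i)
    (hker : ∀ᵐ i ∂μ, a i ≠ 0)
    (α : ℝ) (hα : 0 < α) (x : ι → ℂ) (hx : MemLp x 2 μ)
    (hfin : rangeIntegral μ a α x < ⊤) :
    (∀ ε > (0 : ℝ), ∃ N : ℕ, ∀ m ≥ N, ∀ n ≥ N,
      eLpNorm (fun i => balakrishnan a α x m i - balakrishnan a α x n i) 2 μ
        < ENNReal.ofReal ε) ∧
    ∃ ylim : ι → ℂ, MemLp ylim 2 μ ∧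
      Tendsto (fun n : ℕ =>
          eLpNorm (fun i => balakrishnan a α x n i - ylim i) 2 μ) atTop (𝓝 0) ∧
      MemLp (fun i => ((a i ^ α : ℝ) : ℂ) * ylim i) 2 μ ∧
      x =ᵐ[μ] fun i => ((a i ^ α : ℝ) : ℂ) * ylim i := by
  have hΓ : 0 < Real.Gamma α := Real.Gamma_pos_of_pos hα
  have hΓ2 : 0 < Real.Gamma (2*α) := Real.Gamma_pos_of_pos (by linarith)
  set c : ι → ℝ := fun i => a i ^ (-α) with hc
  have hc0 : ∀ i, 0 ≤ c i := fun i => Real.rpow_nonneg (ha0 i) _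
  set ylim : ι → ℂ := fun i => ((c i : ℝ) : ℂ) * x i with hylim
  have hcm : Measurable c := by rw [hc]; fun_prop
  have hylm : AEStronglyMeasurable ylim μ :=
    ((Complex.measurable_ofReal.comp hcm).aestronglyMeasurable).mul hx.1
  -- measurability of the Balakrishnan coefficients
  have hgm : ∀ n : ℕ, Measurable (balCoef a α n) := by
    intro n
    have hsm : StronglyMeasurable (fun p : ι × ℝ => p.2 ^ (α - 1) * Real.exp (-(p.2 * a p.1))) := by
      apply Measurable.stronglyMeasurable
      fun_prop
    exact (hsm.integral_prod_right' (ν := volume.restrict (Set.Ioc 0 (n:ℝ)))).measurable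
  have hym : ∀ n : ℕ, AEStronglyMeasurable (balakrishnan a α x n) μ := by
    intro n
    have : AEStronglyMeasurable (fun i => (((Real.Gamma α)⁻¹ * balCoef a α n i : ℝ) : ℂ) * x i) μ :=
      ((Complex.measurable_ofReal.comp
        ((measurable_const.mul (hgm n)))).aestronglyMeasurable).mul hx.1
    exact this
  have hapos : ∀ i, a i ≠ 0 → 0 < a i := fun i hi => lt_of_le_of_ne (ha0 i) (Ne.symm hi)
  -- measurable representative of x
  obtain ⟨x', hx'm, hxx'⟩ : ∃ x' : ι → ℂ, StronglyMeasurable x' ∧ x =ᵐ[μ] x' :=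
    ⟨hx.1.mk x, hx.1.stronglyMeasurable_mk, hx.1.ae_eq_mk⟩
  have hx'meas : Measurable x' := hx'm.measurable
  -- a σ-finite set carrying x
  obtain ⟨S, hSm, hS0, hSσ⟩ := (hx.aefinStronglyMeasurable (by norm_num) (by norm_num)).exists_set_sigmaFinite
  haveI : SigmaFinite (μ.restrict S) := hSσ
  have hrestr : ∀ w : ι → ℝ≥0∞,
      ∫⁻ i, (‖x i‖₊:ℝ≥0∞)^2 * w i ∂μ = ∫⁻ i, (‖x i‖₊:ℝ≥0∞)^2 * w i ∂(μ.restrict S) := by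
    intro w
    rw [← lintegral_add_compl (f := fun i => (‖x i‖₊:ℝ≥0∞)^2 * w i) hSm]
    have hz : ∫⁻ i in Sᶜ, (‖x i‖₊:ℝ≥0∞)^2 * w i ∂μ = 0 := by
      rw [← lintegral_zero (μ := μ.restrict Sᶜ)]
      refine lintegral_congr_ae ?_
      filter_upwards [hS0] with i hi
      simp only [Pi.zero_apply] at hi
      simp [hi]
    rw [hz, add_zero]
  have hker' : ∀ᵐ i ∂(μ.restrict S), a i ≠ 0 := ae_restrict_of_ae hker
  have hxx'' : x =ᵐ[μ.restrict S] x' := ae_restrict_of_ae hxx'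
  -- Step A: rewrite `rangeIntegral` via Tonelli
  have hmeasF : AEMeasurable (Function.uncurry fun (t : ℝ) (i : ι) =>
      ENNReal.ofReal (t ^ (2*α-1)) *
        ((‖x' i‖₊:ℝ≥0∞)^2 * ENNReal.ofReal (Real.exp (-(2*t*a i)))))
      ((volume.restrict (Set.Ioi (0:ℝ))).prod (μ.restrict S)) := by
    apply Measurable.aemeasurable
    fun_prop
  have hswap : rangeIntegral μ a α x
      = ∫⁻ i, (∫⁻ t in Set.Ioi (0:ℝ), ENNReal.ofReal (t ^ (2*α - 1)) *
          ((‖x' i‖₊ : ℝ≥0∞) ^ 2 * ENNReal.ofReal (Real.exp (-(2 * t * a i))))) ∂(μ.restrict S) := by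
    rw [rangeIntegral]
    have h1 : ∀ t ∈ Set.Ioi (0:ℝ), ENNReal.ofReal (t ^ (2*α-1)) * heatNormSq μ a x t
        = ∫⁻ i, ENNReal.ofReal (t ^ (2*α-1)) *
            ((‖x' i‖₊:ℝ≥0∞)^2 * ENNReal.ofReal (Real.exp (-(2*t*a i)))) ∂(μ.restrict S) := by
      intro t _
      rw [heatNormSq, hrestr, ← lintegral_const_mul' _ _ ENNReal.ofReal_ne_top]
      exact lintegral_congr_ae (by filter_upwards [hxx''] with i hi; rw [hi])
    rw [setLIntegral_congr_fun measurableSet_Ioi h1]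
    exact lintegral_lintegral_swap hmeasF
  -- evaluate the inner integral
  have hval : ∀ i, a i ≠ 0 →
      (∫⁻ t in Set.Ioi (0:ℝ), ENNReal.ofReal (t ^ (2*α-1)) *
        ((‖x' i‖₊:ℝ≥0∞)^2 * ENNReal.ofReal (Real.exp (-(2*t*a i)))))
      = (‖x' i‖₊:ℝ≥0∞)^2 * ENNReal.ofReal ((1/(2 * a i)) ^ (2*α) * Real.Gamma (2*α)) := by
    intro i hai
    have hai' : 0 < a i := hapos i hai
    have hr : 0 < 2 * a i := by linarith
    calc (∫⁻ t in Set.Ioi (0:ℝ), ENNReal.ofReal (t ^ (2*α-1)) *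
          ((‖x' i‖₊:ℝ≥0∞)^2 * ENNReal.ofReal (Real.exp (-(2*t*a i)))))
        = ∫⁻ t in Set.Ioi (0:ℝ), (‖x' i‖₊:ℝ≥0∞)^2 *
            ENNReal.ofReal (t ^ (2*α-1) * Real.exp (-(2 * a i * t))) := by
          refine setLIntegral_congr_fun measurableSet_Ioi
            (fun t ht => ?_)
          rw [ENNReal.ofReal_mul (Real.rpow_nonneg (le_of_lt ht) _),
            show 2 * t * a i = 2 * a i * t by ring]
          ring
      _ = (‖x' i‖₊:ℝ≥0∞)^2 * ∫⁻ t in Set.Ioi (0:ℝ),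
            ENNReal.ofReal (t ^ (2*α-1) * Real.exp (-(2 * a i * t))) :=
          lintegral_const_mul' _ _ (ENNReal.pow_ne_top ENNReal.coe_ne_top)
      _ = (‖x' i‖₊:ℝ≥0∞)^2 * ENNReal.ofReal
            (∫ t in Set.Ioi (0:ℝ), t ^ (2*α-1) * Real.exp (-(2 * a i * t))) := by
          rw [← MeasureTheory.ofReal_integral_eq_lintegral_ofReal
            (by simpa using (aux_integrable (β := 2*α) (by linarith) hr).integrable)
            (by filter_upwards [ae_restrict_mem measurableSet_Ioi] with t ht
                exact mul_nonneg (Real.rpow_nonneg (le_of_lt ht) _) (Real.exp_nonneg _))]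
      _ = (‖x' i‖₊:ℝ≥0∞)^2 * ENNReal.ofReal ((1/(2 * a i)) ^ (2*α) * Real.Gamma (2*α)) := by
          rw [Real.integral_rpow_mul_exp_neg_mul_Ioi (by linarith) hr]
  -- the key identity
  have hnorm_ylim : ∀ i, ‖ylim i‖ = c i * ‖x i‖ := by
    intro i
    rw [hylim]
    simp only [norm_mul, Complex.norm_real, Real.norm_eq_abs, abs_of_nonneg (hc0 i)]
  have hylim_sq : ∀ i, (‖ylim i‖₊ : ℝ≥0∞)^2 = (‖x i‖₊:ℝ≥0∞)^2 * ENNReal.ofReal (c i ^ 2) := by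
    intro i
    rw [← ofReal_norm_eq_coe_nnnorm (ylim i), ← ofReal_norm_eq_coe_nnnorm (x i),
      ← ENNReal.ofReal_pow (norm_nonneg _), ← ENNReal.ofReal_pow (norm_nonneg _),
      ← ENNReal.ofReal_mul (by positivity), hnorm_ylim i]
    congr 1
    ring
  have hJrestr : ∫⁻ i, (‖ylim i‖₊ : ℝ≥0∞)^2 ∂μ
      = ∫⁻ i, (‖ylim i‖₊ : ℝ≥0∞)^2 ∂(μ.restrict S) := by
    simp only [hylim_sq]
    exact hrestr _
  have hkey : rangeIntegral μ a α x
      = ENNReal.ofReal (Real.Gamma (2*α) * (2:ℝ) ^ (-(2*α))) *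
          ∫⁻ i, (‖ylim i‖₊ : ℝ≥0∞)^2 ∂μ := by
    rw [hswap, hJrestr, ← lintegral_const_mul' _ _ ENNReal.ofReal_ne_top]
    refine lintegral_congr_ae ?_
    filter_upwards [hker', hxx''] with i hai hi
    have hai' : 0 < a i := hapos i hai
    rw [hval i hai]
    have h1 : (1/(2*a i)) ^ (2*α) = (2:ℝ)^(-(2*α)) * c i ^ 2 := by
      have e1 : (1/(2*a i)) ^ (2*α) = (2*a i) ^ (-(2*α)) := by
        rw [Real.rpow_neg (by positivity), one_div, Real.inv_rpow (by positivity)]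
      have e2 : (a i) ^ (-(2*α)) = c i ^ 2 := by
        rw [hc, show -(2*α) = (-α) * (2:ℕ) by push_cast; ring, Real.rpow_mul (ha0 i),
          Real.rpow_natCast]
      rw [e1, Real.mul_rpow (by norm_num) (ha0 i), e2]
    -- turn everything into `ofReal` of real expressions
    have hx'n : ‖x' i‖ = ‖x i‖ := by rw [hi]
    rw [← ofReal_norm_eq_coe_nnnorm (x' i), ← ofReal_norm_eq_coe_nnnorm (ylim i),
      ← ENNReal.ofReal_pow (norm_nonneg _), ← ENNReal.ofReal_pow (norm_nonneg _),
      ← ENNReal.ofReal_mul (by positivity), ← ENNReal.ofReal_mul (by positivity)]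
    congr 1
    rw [h1, hnorm_ylim i, hx'n]
    have h2 : (0:ℝ) ≤ (2:ℝ)^(-(2*α)) := by positivity
    ring
  set J := ∫⁻ i, (‖ylim i‖₊ : ℝ≥0∞)^2 ∂μ with hJdef
  have hJ : J ≠ ⊤ := by
    have hK0 : (ENNReal.ofReal (Real.Gamma (2*α) * (2:ℝ) ^ (-(2*α)))) ≠ 0 :=
      (ENNReal.ofReal_pos.2 (by positivity)).ne'
    have h := hkey ▸ hfin
    exact (ENNReal.lt_top_of_mul_ne_top_right h.ne hK0).ne
  have hylp : MemLp ylim 2 μ := by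
    refine ⟨hylm, ?_⟩
    rw [eLpNorm_two_eq]
    exact ENNReal.rpow_lt_top_of_nonneg (by norm_num) hJ
  -- value of the full Gamma integral
  have hval1 : ∀ i, 0 < a i →
      (∫ t in Set.Ioi (0:ℝ), t ^ (α-1) * Real.exp (-(t * a i))) = c i * Real.Gamma α := by
    intro i hai'
    have e : (∫ t in Set.Ioi (0:ℝ), t ^ (α-1) * Real.exp (-(t * a i)))
        = ∫ t in Set.Ioi (0:ℝ), t ^ (α-1) * Real.exp (-(a i * t)) := by
      refine setIntegral_congr_fun measurableSet_Ioi fun t _ => ?_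
      rw [mul_comm t (a i)]
    rw [e, Real.integral_rpow_mul_exp_neg_mul_Ioi hα hai']
    congr 1
    rw [hc, one_div, Real.inv_rpow (ha0 i), ← Real.rpow_neg (ha0 i)]
  have hInt : ∀ i, 0 < a i →
      MeasureTheory.IntegrableOn (fun t : ℝ => t ^ (α-1) * Real.exp (-(t * a i)))
        (Set.Ioi 0) := by
    intro i hai'
    have h := aux_integrable hα hai'
    refine h.congr_fun (fun t _ => ?_) measurableSet_Ioi
    beta_reduce
    rw [mul_comm (a i) t]
  -- pointwise convergence of the Balakrishnan approximations
  have hconv : ∀ i, a i ≠ 0 →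
      Tendsto (fun n : ℕ => balakrishnan a α x n i) atTop (𝓝 (ylim i)) := by
    intro i hai
    have hai' : 0 < a i := hapos i hai
    have hmono : Monotone (fun n : ℕ => Set.Ioc (0:ℝ) (n:ℝ)) := fun m n h =>
      Set.Ioc_subset_Ioc le_rfl (by exact_mod_cast h)
    have htend : Tendsto (fun n : ℕ => balCoef a α n i) atTop (𝓝 (c i * Real.Gamma α)) := by
      have h := tendsto_setIntegral_of_monotone (fun n : ℕ => measurableSet_Ioc) hmono
        (by rw [iUnion_Ioc_nat]; exact hInt i hai')
      rw [iUnion_Ioc_nat, hval1 i hai'] at h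
      exact h
    have hcoef : Tendsto (fun n : ℕ => (Real.Gamma α)⁻¹ * balCoef a α n i) atTop (𝓝 (c i)) := by
      have h := htend.const_mul (Real.Gamma α)⁻¹
      have e : (Real.Gamma α)⁻¹ * (c i * Real.Gamma α) = c i := by
        field_simp
      rw [e] at h
      exact h
    have h := ((Complex.continuous_ofReal.tendsto _).comp hcoef).mul_const (x i)
    simp only [Function.comp] at h
    rw [hylim]
    simp only [balakrishnan_eq]
    exact h
  -- uniform bound
  have hbnd : ∀ (n : ℕ) i, a i ≠ 0 → ‖balakrishnan a α x n i‖ ≤ ‖ylim i‖ := by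
    intro n i hai
    have hai' : 0 < a i := hapos i hai
    have h0 : 0 ≤ balCoef a α n i := by
      refine setIntegral_nonneg measurableSet_Ioc fun t ht => ?_
      exact mul_nonneg (Real.rpow_nonneg (le_of_lt ht.1) _) (Real.exp_nonneg _)
    have h1 : balCoef a α n i ≤ ∫ t in Set.Ioi (0:ℝ), t ^ (α-1) * Real.exp (-(t * a i)) := by
      refine setIntegral_mono_set (hInt i hai') ?_
        (HasSubset.Subset.eventuallyLE Set.Ioc_subset_Ioi_self)
      filter_upwards [ae_restrict_mem measurableSet_Ioi] with t ht
      exact mul_nonneg (Real.rpow_nonneg (le_of_lt ht) _) (Real.exp_nonneg _)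
    rw [hval1 i hai'] at h1
    have h2 : (Real.Gamma α)⁻¹ * balCoef a α n i ≤ c i := by
      calc (Real.Gamma α)⁻¹ * balCoef a α n i
          ≤ (Real.Gamma α)⁻¹ * (c i * Real.Gamma α) :=
            mul_le_mul_of_nonneg_left h1 (inv_nonneg.2 hΓ.le)
        _ = c i := by field_simp
    rw [balakrishnan_eq, hnorm_ylim i]
    rw [norm_mul, Complex.norm_real, Real.norm_eq_abs,
      abs_of_nonneg (mul_nonneg (inv_nonneg.2 hΓ.le) h0)]
    exact mul_le_mul_of_nonneg_right h2 (norm_nonneg _)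
  -- a.e. convergence and L² convergence by dominated convergence
  have hF_lim : ∀ᵐ i ∂μ, Tendsto
      (fun n : ℕ => (‖balakrishnan a α x n i - ylim i‖₊ : ℝ≥0∞)^2) atTop (𝓝 0) := by
    filter_upwards [hker] with i hi
    have h1 : Tendsto (fun n : ℕ => balakrishnan a α x n i - ylim i) atTop (𝓝 0) := by
      simpa using (hconv i hi).sub (tendsto_const_nhds (x := ylim i))
    have h2 : Tendsto (fun n : ℕ => (‖balakrishnan a α x n i - ylim i‖₊ : ℝ≥0∞)) atTop (𝓝 0) := by
      rw [show (0:ℝ≥0∞) = ((0:ℝ≥0):ℝ≥0∞) by simp]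
      exact ENNReal.tendsto_coe.2 (by simpa using h1.nnnorm)
    have h3 := ((ENNReal.continuous_pow 2).continuousAt).tendsto.comp h2
    simpa [Function.comp_def] using h3
  have hDCT : Tendsto (fun n : ℕ =>
      ∫⁻ i, (‖balakrishnan a α x n i - ylim i‖₊:ℝ≥0∞)^2 ∂μ) atTop (𝓝 0) := by
    have h0 : (0:ℝ≥0∞) = ∫⁻ _, (0:ℝ≥0∞) ∂μ := lintegral_zero.symm
    rw [h0]
    refine tendsto_lintegral_of_dominated_convergence'
      (bound := fun i => 4 * (‖ylim i‖₊:ℝ≥0∞)^2) (fun n => ?_) (fun n => ?_) ?_ hF_lim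
    · exact (((hym n).sub hylm).enorm).pow_const 2
    · filter_upwards [hker] with i hi
      have hb : ‖balakrishnan a α x n i - ylim i‖ ≤ 2 * ‖ylim i‖ := by
        calc ‖balakrishnan a α x n i - ylim i‖
            ≤ ‖balakrishnan a α x n i‖ + ‖ylim i‖ := norm_sub_le _ _
          _ ≤ 2 * ‖ylim i‖ := by have := hbnd n i hi; linarith
      calc (‖balakrishnan a α x n i - ylim i‖₊:ℝ≥0∞)^2
          = ENNReal.ofReal (‖balakrishnan a α x n i - ylim i‖^2) := by
            rw [← ofReal_norm_eq_coe_nnnorm, ← ENNReal.ofReal_pow (norm_nonneg _)]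
        _ ≤ ENNReal.ofReal (4 * ‖ylim i‖^2) := by
            refine ENNReal.ofReal_le_ofReal ?_
            nlinarith [norm_nonneg (balakrishnan a α x n i - ylim i), norm_nonneg (ylim i)]
        _ = 4 * (‖ylim i‖₊:ℝ≥0∞)^2 := by
            rw [ENNReal.ofReal_mul (by norm_num), ← ofReal_norm_eq_coe_nnnorm,
              ← ENNReal.ofReal_pow (norm_nonneg _)]
            norm_num
    · rw [lintegral_const_mul' _ _ (by norm_num)]
      exact ENNReal.mul_ne_top (by norm_num) hJ
  have hL2 : Tendsto (fun n : ℕ =>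
      eLpNorm (fun i => balakrishnan a α x n i - ylim i) 2 μ) atTop (𝓝 0) := by
    have hcont : Continuous fun z : ℝ≥0∞ => z ^ (1/(2:ℝ)) := ENNReal.continuous_rpow_const
    have h := (hcont.continuousAt).tendsto.comp hDCT
    have h0 : ((0:ℝ≥0∞)) ^ (1/(2:ℝ)) = 0 := ENNReal.zero_rpow_of_pos (by norm_num)
    rw [h0] at h
    refine h.congr fun n => ?_
    rw [Function.comp_apply, eLpNorm_two_eq]
  refine ⟨?_, ylim, hylp, hL2, ?_, ?_⟩
  · intro ε hε
    have hε2 : (0:ℝ≥0∞) < ENNReal.ofReal (ε/2) := ENNReal.ofReal_pos.2 (by linarith)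
    have hev : ∀ᶠ n : ℕ in atTop,
        eLpNorm (fun i => balakrishnan a α x n i - ylim i) 2 μ < ENNReal.ofReal (ε/2) :=
      hL2.eventually_lt_const hε2
    obtain ⟨N, hN⟩ := eventually_atTop.1 hev
    refine ⟨N, fun m hm n hn => ?_⟩
    have hsub : (fun i => balakrishnan a α x m i - balakrishnan a α x n i)
        = (fun i => balakrishnan a α x m i - ylim i) - (fun i => balakrishnan a α x n i - ylim i) := by
      funext i; simp [sub_sub_sub_cancel_right]
    calc eLpNorm (fun i => balakrishnan a α x m i - balakrishnan a α x n i) 2 μ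
        ≤ eLpNorm (fun i => balakrishnan a α x m i - ylim i) 2 μ
          + eLpNorm (fun i => balakrishnan a α x n i - ylim i) 2 μ := by
          rw [hsub]
          exact eLpNorm_sub_le ((hym m).sub hylm) ((hym n).sub hylm) (by norm_num)
      _ < ENNReal.ofReal (ε/2) + ENNReal.ofReal (ε/2) :=
          ENNReal.add_lt_add (hN m hm) (hN n hn)
      _ = ENNReal.ofReal ε := by
          rw [← ENNReal.ofReal_add (by linarith) (by linarith)]
          norm_num
  · -- Memℒp of `A^α ylim`
    have hx_eq : x =ᵐ[μ] fun i => ((a i ^ α : ℝ):ℂ) * ylim i := by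
      filter_upwards [hker] with i hi
      have hai' : 0 < a i := hapos i hi
      rw [hylim]
      show x i = ((a i ^ α : ℝ):ℂ) * (((c i : ℝ):ℂ) * x i)
      rw [← mul_assoc, ← Complex.ofReal_mul, hc]
      show x i = ((a i ^ α * a i ^ (-α) : ℝ):ℂ) * x i
      rw [← Real.rpow_add hai']
      norm_num
    exact hx.ae_eq hx_eq
  · filter_upwards [hker] with i hi
    have hai' : 0 < a i := hapos i hi
    rw [hylim]
    show x i = ((a i ^ α : ℝ):ℂ) * (((c i : ℝ):ℂ) * x i)
    rw [← mul_assoc, ← Complex.ofReal_mul, hc]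
    show x i = ((a i ^ α * a i ^ (-α) : ℝ):ℂ) * x i
    rw [← Real.rpow_add hai']
    norm_num
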